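/- A stochastic choice data set ρ admits a set-monotone and stable RAUM representation if and only if there exists a nonnegative function π defined on (nonempty subsets A of X) × U × Φ such that: (a) ρ_A(a) = Σ_{(≻,φ) ∈ U×Φ} π_A(≻,φ)·1{a ∈ φ(A) and a ≻ b for all b ∈ φ(A)\{a}} for all A ∈ 𝒜 and all a ∈ A; (b) Σ_{(≻,φ) ∈ U×Φ} π_A(≻,φ) = 1 for every nonempty A ⊆ X; (c) π_A(≻,φ) = 0 whenever φ(A) = ∅; (d) Σ_{φ∈Φ} π_A(≻,φ) = Σ_{φ∈Φ} π_B(≻,φ) for all nonempty A, B ⊆ X and all ≻ ∈ U; and (e) π_A(≻,φ) ≥ π_B(≻,φ) for all nonempty A ⊆ B ⊆ X, all ≻ ∈ U, and all φ ∈ Φ with φ(A) ≠ ∅. (Equivalently, a finite system of linear equalities in nonnegative unknowns, obtained from (e) by adding nonnegative slack variables, has a solution.) -/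

import Mathlib

open Finset

/-- A strict linear order on `X`, encoded as a Boolean relation. -/
def IsPref {X : Type*} (r : X → X → Bool) : Prop :=
  (∀ a, ¬ r a a) ∧ (∀ a b c, r a b → r b c → r a c) ∧ (∀ a b, a ≠ b → (r a b ∨ r b a))

instance {X : Type*} [Fintype X] [DecidableEq X] : DecidablePred (IsPref (X := X)) :=
  fun r => by unfold IsPref; infer_instance

/-- The set `U` of strict linear orders (preferences) on `X`. -/
abbrev Pref (X : Type*) [Fintype X] [DecidableEq X] := {r : X → X → Bool // IsPref r}

/-- The set `Φ` of consideration filters, indexed by nonempty consideration sets `D ⊆ X`. -/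
abbrev Filt (X : Type*) := {D : Finset X // D.Nonempty}

/-- The filter `φ_D` applied to a menu `A`: it returns `D` if `D ⊆ A`, and `∅` otherwise. -/
def fapp {X : Type*} [DecidableEq X] (φ : Filt X) (A : Finset X) : Finset X :=
  if φ.1 ⊆ A then φ.1 else ∅

/-- `a` is considered and is the `r`-best alternative in `S`. -/
def wins {X : Type*} [DecidableEq X] (r : X → X → Bool) (a : X) (S : Finset X) : Prop :=
  a ∈ S ∧ ∀ b ∈ S.erase a, r a b

instance {X : Type*} [DecidableEq X] (r : X → X → Bool) (a : X) (S : Finset X) :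
    Decidable (wins r a S) := by unfold wins; infer_instance

/-- A RAUM rule: for every menu (nonempty `A ⊆ X`), a probability distribution on `U × Φ`
that puts no mass on filters that are infeasible at `A`. -/
structure RAUM (X : Type*) [Fintype X] [DecidableEq X] where
  p : Finset X → Pref X → Filt X → ℝ
  nonneg : ∀ A : Finset X, A.Nonempty → ∀ pr φ, 0 ≤ p A pr φ
  sum_one : ∀ A : Finset X, A.Nonempty → ∑ pr : Pref X, ∑ φ : Filt X, p A pr φ = 1
  feas : ∀ A : Finset X, A.Nonempty → ∀ pr φ, fapp φ A = ∅ → p A pr φ = 0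

/-- A stochastic choice data set on the collection of menus `𝒜`. -/
def IsSCD {X : Type*} [DecidableEq X] (𝒜 : Finset (Finset X)) (ρ : Finset X → X → ℝ) : Prop :=
  𝒜.Nonempty ∧ (∀ A ∈ 𝒜, A.Nonempty) ∧
    ∀ A ∈ 𝒜, (∀ a ∈ A, 0 ≤ ρ A a) ∧ ∑ a ∈ A, ρ A a = 1

/-- `ρ` admits the RAUM representation `π`. -/
def Represents {X : Type*} [Fintype X] [DecidableEq X] (ρ : Finset X → X → ℝ)
    (𝒜 : Finset (Finset X)) (π : RAUM X) : Prop :=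
  ∀ A ∈ 𝒜, ∀ a ∈ A,
    ρ A a = ∑ pr : Pref X, ∑ φ : Filt X,
      π.p A pr φ * (if wins pr.1 a (fapp φ A) then (1 : ℝ) else 0)

/-- `π` is stable with marginal preference distribution `pstar`. -/
def Stable {X : Type*} [Fintype X] [DecidableEq X] (π : RAUM X) (pstar : Pref X → ℝ) : Prop :=
  (∀ pr, 0 ≤ pstar pr) ∧ (∑ pr : Pref X, pstar pr = 1) ∧
    ∀ A : Finset X, A.Nonempty → ∀ pr, ∑ φ : Filt X, π.p A pr φ = pstar pr

/-- `π` is set-monotone. -/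
def SetMonotone {X : Type*} [Fintype X] [DecidableEq X] (π : RAUM X) : Prop :=
  ∃ lam : Finset X → Pref X → Filt X → ℝ,
    (∀ A : Finset X, A.Nonempty → ∀ pr,
      (∀ φ, 0 ≤ lam A pr φ) ∧ (∑ φ : Filt X, lam A pr φ = 1)) ∧
    (∀ A : Finset X, A.Nonempty → ∀ pr φ, fapp φ A = ∅ → lam A pr φ = 0) ∧
    (∀ A B : Finset X, A.Nonempty → A ⊆ B → ∀ pr φ, fapp φ A ≠ ∅ → lam B pr φ ≤ lam A pr φ) ∧
    (∀ A : Finset X, A.Nonempty → ∀ pr φ, π.p A pr φ = lam A pr φ * ∑ φ' : Filt X, π.p A pr φ')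


lemma singsum {X : Type*} [Fintype X] [DecidableEq X] (A : Finset X) (hA : A.Nonempty) :
    ∑ φ : Filt X, (if φ.1 ⊆ A ∧ φ.1.card = 1 then (A.card : ℝ)⁻¹ else 0) = 1 := by
  classical
  have hfil : (Finset.univ.filter fun φ : Filt X => φ.1 ⊆ A ∧ φ.1.card = 1)
      = A.attach.image (fun a => (⟨{a.1}, Finset.singleton_nonempty _⟩ : Filt X)) := by
    ext φ
    simp only [Finset.mem_filter, Finset.mem_univ, true_and, Finset.mem_image,
      Finset.mem_attach]
    constructor
    · rintro ⟨hsub, hcard⟩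
      obtain ⟨a, ha⟩ := Finset.card_eq_one.mp hcard
      refine ⟨⟨a, hsub (ha ▸ Finset.mem_singleton_self a)⟩, ?_⟩
      exact Subtype.ext ha.symm
    · rintro ⟨a, rfl⟩
      exact ⟨Finset.singleton_subset_iff.mpr a.2, Finset.card_singleton _⟩
  have hcard : (Finset.univ.filter fun φ : Filt X => φ.1 ⊆ A ∧ φ.1.card = 1).card = A.card := by
    rw [hfil, Finset.card_image_of_injective]
    · exact Finset.card_attach
    · intro a b hab
      exact Subtype.ext (Finset.singleton_injective (congrArg Subtype.val hab))
  rw [Finset.sum_ite, Finset.sum_const_zero, add_zero, Finset.sum_const, hcard,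
    nsmul_eq_mul]
  have : (0 : ℝ) < A.card := by exact_mod_cast Finset.card_pos.mpr hA
  field_simp

lemma fapp_ne_empty_iff {X : Type*} [DecidableEq X] (φ : Filt X) (A : Finset X) :
    fapp φ A ≠ ∅ ↔ φ.1 ⊆ A := by
  unfold fapp
  split
  · simp_all [← Finset.nonempty_iff_ne_empty, φ.2]
  · simp_all

/-- Theorem 1: `ρ` admits a set-monotone and stable RAUM representation if and
only if there exists a nonnegative function `p` on (nonempty menus) × U × Φ satisfying the
linear restrictions (a)–(e): representation of the data, summing to one on every menu,
feasibility, stability of the preference marginal across menus, and set-monotonicity. -/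
theorem stmt4 {X : Type*} [Fintype X] [DecidableEq X]
    (𝒜 : Finset (Finset X)) (ρ : Finset X → X → ℝ) (hSCD : IsSCD 𝒜 ρ) :
    (∃ (π : RAUM X) (pstar : Pref X → ℝ),
        Stable π pstar ∧ SetMonotone π ∧ Represents ρ 𝒜 π)
    ↔
    (∃ p : Finset X → Pref X → Filt X → ℝ,
      (∀ A : Finset X, A.Nonempty → ∀ pr φ, 0 ≤ p A pr φ) ∧
      (∀ A ∈ 𝒜, ∀ a ∈ A,
        ρ A a = ∑ pr : Pref X, ∑ φ : Filt X,
          p A pr φ * (if wins pr.1 a (fapp φ A) then (1 : ℝ) else 0)) ∧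
      (∀ A : Finset X, A.Nonempty → ∑ pr : Pref X, ∑ φ : Filt X, p A pr φ = 1) ∧
      (∀ A : Finset X, A.Nonempty → ∀ pr φ, fapp φ A = ∅ → p A pr φ = 0) ∧
      (∀ A B : Finset X, A.Nonempty → B.Nonempty → ∀ pr,
        ∑ φ : Filt X, p A pr φ = ∑ φ : Filt X, p B pr φ) ∧
      (∀ A B : Finset X, A.Nonempty → A ⊆ B → ∀ pr φ, fapp φ A ≠ ∅ →
        p B pr φ ≤ p A pr φ)) := by
  classical
  obtain ⟨h𝒜, hmenu, hprob⟩ := hSCD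
  constructor
  · rintro ⟨π, pstar, ⟨hps0, hps1, hpsum⟩, ⟨lam, hlamdist, hlamfeas, hlammono, hlameq⟩, hrep⟩
    refine ⟨π.p, π.nonneg, hrep, π.sum_one, π.feas, ?_, ?_⟩
    · intro A B hA hB pr
      rw [hpsum A hA pr, hpsum B hB pr]
    · intro A B hA hAB pr φ hφ
      have hB : B.Nonempty := hA.mono hAB
      rw [hlameq A hA pr φ, hlameq B hB pr φ, hpsum A hA pr, hpsum B hB pr]
      exact mul_le_mul_of_nonneg_right (hlammono A B hA hAB pr φ hφ) (hps0 pr)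
  · rintro ⟨p, hpos, hrep, hone, hfeas, hstab, hmono⟩
    obtain ⟨A0, hA0⟩ := h𝒜
    have hA0ne : A0.Nonempty := hmenu A0 hA0
    set pstar : Pref X → ℝ := fun pr => ∑ φ : Filt X, p A0 pr φ with hpstar
    have hps0 : ∀ pr, 0 ≤ pstar pr := fun pr =>
      Finset.sum_nonneg fun φ _ => hpos A0 hA0ne pr φ
    have hsum : ∀ A : Finset X, A.Nonempty → ∀ pr, ∑ φ : Filt X, p A pr φ = pstar pr :=
      fun A hA pr => hstab A A0 hA hA0ne pr
    have hzero : ∀ pr, pstar pr = 0 → ∀ A : Finset X, A.Nonempty → ∀ φ, p A pr φ = 0 := by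
      intro pr h0 A hA φ
      have := hsum A hA pr
      have hz : ∑ φ : Filt X, p A pr φ = 0 := by rw [this, h0]
      exact (Finset.sum_eq_zero_iff_of_nonneg fun φ _ => hpos A hA pr φ).mp hz φ
        (Finset.mem_univ φ)
    refine ⟨⟨p, hpos, hone, hfeas⟩, pstar, ⟨hps0, ?_, hsum⟩, ?_, hrep⟩
    · rw [← hone A0 hA0ne]
    · set lam : Finset X → Pref X → Filt X → ℝ := fun A pr φ =>
        if pstar pr = 0 then (if φ.1 ⊆ A ∧ φ.1.card = 1 then (A.card : ℝ)⁻¹ else 0)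
        else p A pr φ / pstar pr with hlam
      refine ⟨lam, ?_, ?_, ?_, ?_⟩
      · intro A hA pr
        constructor
        · intro φ
          simp only [hlam]
          split
          · split
            · exact inv_nonneg.mpr (Nat.cast_nonneg _)
            · exact le_refl 0
          · exact div_nonneg (hpos A hA pr φ) (hps0 pr)
        · simp only [hlam]
          split
          · exact singsum A hA
          · rw [← Finset.sum_div, hsum A hA pr, div_self (by assumption)]
      · intro A hA pr φ hφA
        have hns : ¬ φ.1 ⊆ A := by
          intro hsub
          exact ((fapp_ne_empty_iff φ A).mpr hsub) hφA
        simp only [hlam]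
        split
        · simp [hns]
        · rw [hfeas A hA pr φ hφA, zero_div]
      · intro A B hA hAB pr φ hφ
        have hsub : φ.1 ⊆ A := (fapp_ne_empty_iff φ A).mp hφ
        simp only [hlam]
        split
        · rename_i h0
          by_cases hc : φ.1.card = 1
          · simp only [hsub, hsub.trans hAB, hc, and_true, if_true]
            have h1 : (0 : ℝ) < A.card := by exact_mod_cast Finset.card_pos.mpr hA
            exact inv_anti₀ h1 (by exact_mod_cast Finset.card_le_card hAB)
          · simp [hc]
        · rename_i h0
          exact div_le_div_of_nonneg_right (hmono A B hA hAB pr φ hφ) (hps0 pr)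
      · intro A hA pr φ
        simp only [hlam, hsum A hA pr]
        split
        · rename_i h0
          rw [h0, mul_zero, hzero pr h0 A hA φ]
        · rename_i h0
          rw [div_mul_cancel₀ _ h0]
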